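/- As ρ → 0⁺, the difference between the equal-power ZFDPC-SUS and ZFBF-SUS sum rates satisfies R_DPC(ρ) − R_BF(ρ) = (ρ/ln 2) · Σ_{i=1}^{M} (1 − 1/(1 + κ_i)) λ_i |l_{i,i}|² + O(ρ²), and the leading coefficient Σ_{i=1}^{M} (1 − 1/(1 + κ_i)) λ_i |l_{i,i}|² is nonnegative; that is, the function ρ ↦ ρ^{-2} · ( R_DPC(ρ) − R_BF(ρ) − (ρ/ln 2) Σ_{i=1}^{M} (1 − 1/(1 + κ_i)) λ_i |l_{i,i}|² ) is bounded as ρ → 0⁺. -/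

import Mathlib

open Matrix Filter Finset MeasureTheory

/-- The benchmark rate `C(ρ) = log₂ det(I + ρ C Cᴴ)` with `C = Λ^{1/2} L Q`. -/
noncomputable def benchRate (M m : ℕ) (lam : Fin M → ℝ)
    (L : Matrix (Fin M) (Fin M) ℂ) (Q : Matrix (Fin M) (Fin m) ℂ) (ρ : ℝ) : ℝ :=
  Real.logb 2
    (((1 : Matrix (Fin M) (Fin M) ℂ) +
      (ρ : ℂ) • ((Matrix.diagonal (fun i => (Real.sqrt (lam i) : ℂ)) * L * Q) *
        (Matrix.diagonal (fun i => (Real.sqrt (lam i) : ℂ)) * L * Q)ᴴ)).det).re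

/-- The equal-power ZFDPC-SUS sum rate `R_DPC(ρ) = Σ_i log₂(1 + ρ λ_i |l_{i,i}|²)`. -/
noncomputable def rateDPC (M : ℕ) (lam : Fin M → ℝ)
    (L : Matrix (Fin M) (Fin M) ℂ) (ρ : ℝ) : ℝ :=
  ∑ i, Real.logb 2 (1 + ρ * lam i * Complex.normSq (L i i))

/-- The equal-power ZFBF-SUS sum rate `R_BF(ρ) = Σ_i log₂(1 + ρ λ_i / ‖t_i‖²)`,
where `‖t_i‖² = Σ_j |t_{j,i}|²` is the squared norm of the `i`-th column of `T = L⁻¹`. -/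
noncomputable def rateBF (M : ℕ) (lam : Fin M → ℝ)
    (L : Matrix (Fin M) (Fin M) ℂ) (ρ : ℝ) : ℝ :=
  ∑ i, Real.logb 2 (1 + ρ * lam i / ∑ j, Complex.normSq (L⁻¹ j i))

/-- `κ_i = Σ_{j>i} |t_{j,i}|²/|t_{i,i}|²` where `T = L⁻¹`. -/
noncomputable def kappa (M : ℕ) (L : Matrix (Fin M) (Fin M) ℂ) (i : Fin M) : ℝ :=
  ∑ j ∈ Finset.univ.filter (fun j => i < j),
    Complex.normSq (L⁻¹ j i) / Complex.normSq (L⁻¹ i i)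

/-- `η_i = Σ_{j<i} |l_{i,j}|²/|l_{i,i}|²`. -/
noncomputable def eta (M : ℕ) (L : Matrix (Fin M) (Fin M) ℂ) (i : Fin M) : ℝ :=
  ∑ j ∈ Finset.univ.filter (fun j => j < i),
    Complex.normSq (L i j) / Complex.normSq (L i i)

lemma abs_log_one_add_sub_le {x : ℝ} (hx : 0 ≤ x) : |Real.log (1+x) - x| ≤ x^2 := by
  have h1 : (0:ℝ) < 1 + x := by linarith
  have hub : Real.log (1+x) ≤ x := by
    have := Real.log_le_sub_one_of_pos h1; linarith
  have h2 : Real.log (1+x)⁻¹ ≤ (1+x)⁻¹ - 1 := Real.log_le_sub_one_of_pos (by positivity)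
  rw [Real.log_inv] at h2
  have h4 : x/(1+x) ≤ Real.log (1+x) := by
    have h3 : (1+x)⁻¹ - 1 = -(x/(1+x)) := by field_simp; ring
    rw [h3] at h2; linarith
  have h5 : x - x^2 ≤ x/(1+x) := by
    rw [le_div_iff₀ h1]; nlinarith
  rw [abs_le]; constructor <;> nlinarith [sq_nonneg x]

lemma logb_lin_bound {x : ℝ} (hx : 0 ≤ x) :
    |Real.logb 2 (1+x) - x / Real.log 2| ≤ x^2 / Real.log 2 := by
  have hl2 : (0:ℝ) < Real.log 2 := Real.log_pos one_lt_two
  rw [Real.logb, div_sub_div_same, abs_div, abs_of_pos hl2]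
  gcongr
  exact abs_log_one_add_sub_le hx


/-- Low-SNR difference between ZFDPC-SUS and ZFBF-SUS:
`R_DPC(ρ) − R_BF(ρ) = (ρ/ln 2) Σ_i (1 − 1/(1+κ_i)) λ_i |l_{i,i}|² + O(ρ²)` as `ρ → 0⁺`,
and the leading coefficient is nonnegative. -/
theorem lowSNR_diff_ZFDPC_ZFBF
    (M m : ℕ) (hM : 1 ≤ M) (hm : M ≤ m)
    (lam : Fin M → ℝ) (hlam : ∀ i, 0 < lam i)
    (L : Matrix (Fin M) (Fin M) ℂ)
    (hLtri : ∀ i j : Fin M, i < j → L i j = 0)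
    (hLdiag : ∀ i : Fin M, L i i ≠ 0)
    (Q : Matrix (Fin M) (Fin m) ℂ) (hQ : Q * Qᴴ = 1) :
    0 ≤ ∑ i, (1 - 1 / (1 + kappa M L i)) * (lam i * Complex.normSq (L i i)) ∧
    ∃ B : ℝ, ∀ᶠ ρ : ℝ in nhdsWithin (0 : ℝ) (Set.Ioi 0),
      |(ρ ^ 2)⁻¹ * (rateDPC M lam L ρ - rateBF M lam L ρ -
        (ρ / Real.log 2) *
          ∑ i, (1 - 1 / (1 + kappa M L i)) *
            (lam i * Complex.normSq (L i i)))| ≤ B := by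
  have hl2 : (0:ℝ) < Real.log 2 := Real.log_pos one_lt_two
  -- basic triangular facts
  have hBT : L.BlockTriangular OrderDual.toDual := fun i j h => hLtri i j h
  have hdet : L.det ≠ 0 := by
    rw [Matrix.det_of_lowerTriangular L hBT]
    exact Finset.prod_ne_zero_iff.mpr fun i _ => hLdiag i
  haveI : Invertible L := L.invertibleOfIsUnitDet (Ne.isUnit hdet)
  have hT0 : ∀ i j : Fin M, j < i → L⁻¹ j i = 0 := fun i j h =>
    Matrix.blockTriangular_inv_of_blockTriangular hBT h
  have hTdiag : ∀ i, L⁻¹ i i * L i i = 1 := by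
    intro i
    have h1 : (L⁻¹ * L) i i = 1 := by
      rw [Matrix.nonsing_inv_mul L (Ne.isUnit hdet)]; exact Matrix.one_apply_eq i
    rw [Matrix.mul_apply] at h1
    have h2 : ∑ k, L⁻¹ i k * L k i = L⁻¹ i i * L i i := by
      refine Finset.sum_eq_single i ?_ ?_
      · intro k _ hk
        rcases lt_or_gt_of_ne hk with h | h
        · rw [hLtri k i h, mul_zero]
        · rw [hT0 k i h, zero_mul]
      · exact fun h => absurd (Finset.mem_univ i) h
    rw [h2] at h1
    exact h1
  -- abbreviations
  set a : Fin M → ℝ := fun i => lam i * Complex.normSq (L i i) with ha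
  set S : Fin M → ℝ := fun i => ∑ j, Complex.normSq (L⁻¹ j i) with hS
  set b : Fin M → ℝ := fun i => lam i / S i with hb
  have hnT : ∀ i, 0 < Complex.normSq (L⁻¹ i i) := by
    intro i
    have : L⁻¹ i i ≠ 0 := fun h => by simpa [h] using hTdiag i
    exact Complex.normSq_pos.mpr this
  have hnTL : ∀ i, Complex.normSq (L⁻¹ i i) * Complex.normSq (L i i) = 1 := by
    intro i; rw [← Complex.normSq_mul, hTdiag i, Complex.normSq_one]
  have hκ : ∀ i, 0 ≤ kappa M L i := fun i =>
    Finset.sum_nonneg fun j _ => div_nonneg (Complex.normSq_nonneg _) (Complex.normSq_nonneg _)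
  have h1κ : ∀ i, (0:ℝ) < 1 + kappa M L i := fun i => by linarith [hκ i]
  have hSeq : ∀ i, S i = Complex.normSq (L⁻¹ i i) * (1 + kappa M L i) := by
    intro i
    have hsplit : S i = (∑ j ∈ Finset.univ.filter (fun j => i < j), Complex.normSq (L⁻¹ j i))
        + ∑ j ∈ Finset.univ.filter (fun j => ¬ i < j), Complex.normSq (L⁻¹ j i) :=
      (Finset.sum_filter_add_sum_filter_not _ _ _).symm
    have hrest : ∑ j ∈ Finset.univ.filter (fun j => ¬ i < j), Complex.normSq (L⁻¹ j i)
        = Complex.normSq (L⁻¹ i i) := by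
      refine Finset.sum_eq_single_of_mem i (by simp) ?_
      intro j hj hji
      rw [Finset.mem_filter] at hj
      have : j < i := lt_of_le_of_ne (not_lt.mp hj.2) hji
      rw [hT0 i j this, Complex.normSq_zero]
    have hκeq : kappa M L i * Complex.normSq (L⁻¹ i i)
        = ∑ j ∈ Finset.univ.filter (fun j => i < j), Complex.normSq (L⁻¹ j i) := by
      rw [kappa, Finset.sum_mul]
      refine Finset.sum_congr rfl fun j _ => ?_
      rw [div_mul_cancel₀ _ (hnT i).ne']
    rw [hsplit, hrest, ← hκeq]; ring
  have hSpos : ∀ i, 0 < S i := fun i => by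
    rw [hSeq i]; exact mul_pos (hnT i) (h1κ i)
  have hbpos : ∀ i, 0 < b i := fun i => div_pos (hlam i) (hSpos i)
  have hapos : ∀ i, 0 < a i := fun i => mul_pos (hlam i) (Complex.normSq_pos.mpr (hLdiag i))
  -- key coefficient identity
  have key : ∀ i, (1 - 1 / (1 + kappa M L i)) * a i = a i - b i := by
    intro i
    have hb' : b i = a i / (1 + kappa M L i) := by
      show lam i / S i = a i / (1 + kappa M L i)
      rw [hSeq i, div_eq_div_iff (mul_pos (hnT i) (h1κ i)).ne' (h1κ i).ne']
      show lam i * (1 + kappa M L i) = lam i * Complex.normSq (L i i) * _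
      linear_combination (-(lam i * (1 + kappa M L i))) * hnTL i
    rw [hb', sub_mul, one_mul, one_div, inv_mul_eq_div]
  constructor
  · refine Finset.sum_nonneg fun i _ => mul_nonneg ?_ (hapos i).le
    have : 1 / (1 + kappa M L i) ≤ 1 := by
      rw [div_le_one (h1κ i)]; linarith [hκ i]
    linarith
  · refine ⟨(∑ i, (a i ^ 2 + b i ^ 2)) / Real.log 2, ?_⟩
    filter_upwards [self_mem_nhdsWithin] with ρ hρ
    replace hρ : (0:ℝ) < ρ := hρ
    have hE : rateDPC M lam L ρ - rateBF M lam L ρ -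
        (ρ / Real.log 2) * ∑ i, (1 - 1 / (1 + kappa M L i)) * (lam i * Complex.normSq (L i i))
        = ∑ i, ((Real.logb 2 (1 + ρ * a i) - ρ * a i / Real.log 2)
            - (Real.logb 2 (1 + ρ * b i) - ρ * b i / Real.log 2)) := by
      have hDPC : rateDPC M lam L ρ = ∑ i, Real.logb 2 (1 + ρ * a i) := by
        refine Finset.sum_congr rfl fun i _ => ?_
        rw [ha]; ring_nf
      have hBF : rateBF M lam L ρ = ∑ i, Real.logb 2 (1 + ρ * b i) := by
        refine Finset.sum_congr rfl fun i _ => ?_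
        rw [hb, mul_div_assoc]
      have hcoef : (ρ / Real.log 2) * ∑ i, (1 - 1 / (1 + kappa M L i)) *
          (lam i * Complex.normSq (L i i))
          = ∑ i, (ρ * a i / Real.log 2 - ρ * b i / Real.log 2) := by
        rw [Finset.mul_sum]
        refine Finset.sum_congr rfl fun i _ => ?_
        rw [show (1 - 1 / (1 + kappa M L i)) * (lam i * Complex.normSq (L i i))
            = (1 - 1 / (1 + kappa M L i)) * a i from rfl, key i]
        ring
      rw [hDPC, hBF, hcoef, ← Finset.sum_sub_distrib, ← Finset.sum_sub_distrib]
      refine Finset.sum_congr rfl fun i _ => ?_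
      ring
    rw [hE, abs_mul, abs_inv, abs_of_pos (by positivity : (0:ℝ) < ρ^2)]
    have hsum : |∑ i, ((Real.logb 2 (1 + ρ * a i) - ρ * a i / Real.log 2)
            - (Real.logb 2 (1 + ρ * b i) - ρ * b i / Real.log 2))|
        ≤ ρ^2 * ((∑ i, (a i ^ 2 + b i ^ 2)) / Real.log 2) := by
      refine (Finset.abs_sum_le_sum_abs _ _).trans ?_
      rw [← mul_div_assoc, Finset.mul_sum, Finset.sum_div]
      refine Finset.sum_le_sum fun i _ => ?_
      have h1 := logb_lin_bound (mul_nonneg hρ.le (hapos i).le)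
      have h2 := logb_lin_bound (mul_nonneg hρ.le (hbpos i).le)
      have := abs_sub (Real.logb 2 (1 + ρ * a i) - ρ * a i / Real.log 2)
        (Real.logb 2 (1 + ρ * b i) - ρ * b i / Real.log 2)
      have hle : |(Real.logb 2 (1 + ρ * a i) - ρ * a i / Real.log 2)
          - (Real.logb 2 (1 + ρ * b i) - ρ * b i / Real.log 2)|
          ≤ (ρ * a i)^2 / Real.log 2 + (ρ * b i)^2 / Real.log 2 := by
        calc _ ≤ _ := abs_sub _ _
          _ ≤ _ := add_le_add h1 h2
      refine hle.trans (le_of_eq (by ring))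
    calc (ρ^2)⁻¹ * |∑ i, ((Real.logb 2 (1 + ρ * a i) - ρ * a i / Real.log 2)
            - (Real.logb 2 (1 + ρ * b i) - ρ * b i / Real.log 2))|
        ≤ (ρ^2)⁻¹ * (ρ^2 * ((∑ i, (a i ^ 2 + b i ^ 2)) / Real.log 2)) := by
          gcongr
      _ = (∑ i, (a i ^ 2 + b i ^ 2)) / Real.log 2 := by
          rw [← mul_assoc, inv_mul_cancel₀ (by positivity), one_mul]
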